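/- Let p, n, k be positive integers with p ≥ 2, let S ⊆ {1,…,p} with |S| = k. Let L : ℝ^p → ℝ be differentiable and satisfy the local RSC inequality ⟨∇L(β+Δ) − ∇L(β), Δ⟩ ≥ α₁‖Δ‖₂² − τ₁ (log p / n)‖Δ‖₁² for all β ∈ ℝ^p and all Δ with ‖Δ‖₂ ≤ 1, where α₁ > 0 and τ₁ ≥ 0, and let ρ : ℝ → ℝ be μ-amenable with 0 ≤ μ < α₁; set q(t) := λ|t| − ρ(t), ρ(β) := Σ_{j=1}^p ρ(β_j), ∇q(β) := (q'(β_j))_{j=1}^p. Suppose β̂ ∈ ℝ^p satisfies supp(β̂) ⊆ S, ‖β̂‖₁ ≤ R, and ∇L(β̂) − ∇q(β̂) + λẑ = 0 for some ẑ ∈ ℝ^p with ẑ_S ∈ ∂‖β̂_S‖₁ and max_{j ∉ S}|ẑ_j| ≤ 1 − δ, where δ ∈ (0,1]. Let β̃ be a stationary point of the program min_{‖β‖₁ ≤ R} {L(β) + ρ(β)} with ‖β̃ − β̂‖₂ ≤ 1. If λ ≥ 4Rτ₁ log p/(δn), then ‖β̃ − β̂‖₁ ≤ (4/δ + 2)·√k·‖β̃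 − β̂‖₂. -/

import Mathlib

open scoped BigOperators

/-- A function `ρ : ℝ → ℝ` is `μ`-amenable (with selection parameter `lam > 0`):
(i) symmetric around zero with `ρ 0 = 0`; (ii) nondecreasing on `[0, ∞)`;
(iii) `t ↦ ρ t / t` nonincreasing on `(0, ∞)`; (iv) differentiable away from `0`;
(v) `t ↦ ρ t + μ/2 t²` convex; (vi) `ρ'(t) → lam` as `t → 0⁺`. -/
structure Amenable (lam mu : ℝ) (ρ : ℝ → ℝ) : Prop where
  symm : ∀ t : ℝ, ρ (-t) = ρ t
  zero : ρ 0 = 0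
  mono : MonotoneOn ρ (Set.Ici (0 : ℝ))
  ratio : AntitoneOn (fun t => ρ t / t) (Set.Ioi (0 : ℝ))
  diff : ∀ t : ℝ, t ≠ 0 → DifferentiableAt ℝ ρ t
  conv : ConvexOn ℝ Set.univ (fun t => ρ t + mu / 2 * t ^ 2)
  deriv_lim : Filter.Tendsto (deriv ρ) (nhdsWithin 0 (Set.Ioi 0)) (nhds lam)


open scoped RealInnerProductSpace

/-- The ℓ₁-norm on `ℝ^p`. -/
noncomputable def norm1 {p : ℕ} (x : EuclideanSpace ℝ (Fin p)) : ℝ := ∑ j, |x j|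

/-- The ℓ_∞-norm on `ℝ^p`. -/
noncomputable def normInf {p : ℕ} (x : EuclideanSpace ℝ (Fin p)) : ℝ := ⨆ j, |x j|

/-- The subdifferential of the ℓ₁-norm at `x`: vectors `v` with `‖v‖_∞ ≤ 1` and
`⟨v, x⟩ = ‖x‖₁`. -/
def l1Subdiff {m : Type*} [Fintype m] (x : m → ℝ) : Set (m → ℝ) :=
  {v | (∀ j, |v j| ≤ 1) ∧ ∑ j, v j * x j = ∑ j, |x j|}

/-- The `(α, τ)`-RSC condition for a loss `L` with parameters `α₁, α₂, τ₁, τ₂` (and `n`, `p`). -/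
def RSCCond (p n : ℕ) (α₁ α₂ τ₁ τ₂ : ℝ) (L : EuclideanSpace ℝ (Fin p) → ℝ) : Prop :=
  ∀ β Δ : EuclideanSpace ℝ (Fin p),
    (‖Δ‖ ≤ 1 → α₁ * ‖Δ‖ ^ 2 - τ₁ * (Real.log p / n) * (norm1 Δ) ^ 2 ≤
      ⟪gradient L (β + Δ) - gradient L β, Δ⟫) ∧
    (1 ≤ ‖Δ‖ → α₂ * ‖Δ‖ - τ₂ * Real.sqrt (Real.log p / n) * norm1 Δ ≤
      ⟪gradient L (β + Δ) - gradient L β, Δ⟫)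

/-- The derivative of `q(t) = λ|t| − ρ(t)`. -/
noncomputable def qDeriv (lam : ℝ) (ρ : ℝ → ℝ) (t : ℝ) : ℝ :=
  deriv (fun u => lam * |u| - ρ u) t

/-- `βt` is a stationary point of the program `min_{‖β‖₁ ≤ R} L β + Σⱼ ρ(βⱼ)`:
`‖βt‖₁ ≤ R` and there is `z ∈ ∂‖βt‖₁` with
`⟨∇L(βt) − ∇q(βt) + λ z, β − βt⟩ ≥ 0` for all feasible `β`. -/
def IsStationaryPt {p : ℕ} (L : EuclideanSpace ℝ (Fin p) → ℝ) (ρ : ℝ → ℝ) (lam R : ℝ)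
    (βt : EuclideanSpace ℝ (Fin p)) : Prop :=
  norm1 βt ≤ R ∧ ∃ z : Fin p → ℝ, z ∈ l1Subdiff (fun j => βt j) ∧
    ∀ β : EuclideanSpace ℝ (Fin p), norm1 β ≤ R →
      0 ≤ ∑ j, (gradient L βt j - qDeriv lam ρ (βt j) + lam * z j) * (β j - βt j)

section AuxQ

variable {lam mu : ℝ} {ρ : ℝ → ℝ}

lemma aux_qderiv_zero (hsymm : ∀ t : ℝ, ρ (-t) = ρ t) : qDeriv lam ρ 0 = 0 := by
  set f : ℝ → ℝ := fun u => lam * |u| - ρ u with hf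
  have hfe : (fun x => f (-x)) = f := by
    funext x; simp [hf, abs_neg, hsymm]
  have h := deriv_comp_neg f (0 : ℝ)
  rw [hfe, neg_zero] at h
  have : deriv f 0 = 0 := by linarith
  simpa [qDeriv, hf] using this

lemma aux_qderiv_sign {t : ℝ} (ht : t ≠ 0) (hρd : DifferentiableAt ℝ ρ t) :
    qDeriv lam ρ t = lam * (SignType.sign t : ℝ) - deriv ρ t := by
  have h : HasDerivAt (fun u => lam * |u| - ρ u) (lam * (SignType.sign t : ℝ) - deriv ρ t) t :=
    ((hasDerivAt_abs ht).const_mul lam).sub hρd.hasDerivAt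
  exact h.deriv

/-- `g = ρ + μ/2 t²` has derivative `ρ' t + μ t` at points of differentiability of `ρ`. -/
lemma aux_g_hasDeriv {t : ℝ} (hρd : DifferentiableAt ℝ ρ t) :
    HasDerivAt (fun u => ρ u + mu / 2 * u ^ 2) (deriv ρ t + mu * t) t := by
  have h := hρd.hasDerivAt.add ((hasDerivAt_pow 2 t).const_mul (mu / 2))
  refine h.congr_deriv ?_
  ring

lemma aux_g_mono (hconv : ConvexOn ℝ Set.univ (fun u => ρ u + mu / 2 * u ^ 2))
    (hdiff : ∀ t : ℝ, t ≠ 0 → DifferentiableAt ℝ ρ t)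
    {a b : ℝ} (ha : a ≠ 0) (hb : b ≠ 0) (hab : a ≤ b) :
    deriv (fun u => ρ u + mu / 2 * u ^ 2) a ≤ deriv (fun u => ρ u + mu / 2 * u ^ 2) b := by
  rcases eq_or_lt_of_le hab with rfl | hlt
  · exact le_rfl
  · have hda := (aux_g_hasDeriv (mu := mu) (hdiff a ha)).differentiableAt
    have hdb := (aux_g_hasDeriv (mu := mu) (hdiff b hb)).differentiableAt
    exact (hconv.deriv_le_slope (Set.mem_univ a) (Set.mem_univ b) hlt hda).trans
      (hconv.slope_le_deriv (Set.mem_univ a) (Set.mem_univ b) hlt hdb)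

/-- the derivative of `g` tends to `lam` from the right at `0`, hence `g' t ≥ lam` for `t > 0`. -/
lemma aux_g_lb (hconv : ConvexOn ℝ Set.univ (fun u => ρ u + mu / 2 * u ^ 2))
    (hdiff : ∀ t : ℝ, t ≠ 0 → DifferentiableAt ℝ ρ t)
    (hlim : Filter.Tendsto (deriv ρ) (nhdsWithin 0 (Set.Ioi 0)) (nhds lam))
    {t : ℝ} (ht : 0 < t) :
    lam ≤ deriv (fun u => ρ u + mu / 2 * u ^ 2) t := by
  set g : ℝ → ℝ := fun u => ρ u + mu / 2 * u ^ 2 with hg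
  have htend : Filter.Tendsto (deriv g) (nhdsWithin 0 (Set.Ioi 0)) (nhds lam) := by
    have h1 : Filter.Tendsto (fun s => deriv ρ s + mu * s) (nhdsWithin 0 (Set.Ioi 0))
        (nhds (lam + mu * 0)) := by
      exact hlim.add (((continuous_const.mul continuous_id).tendsto 0).mono_left
        nhdsWithin_le_nhds)
    rw [mul_zero, add_zero] at h1
    refine h1.congr' ?_
    filter_upwards [self_mem_nhdsWithin] with s hs
    exact ((aux_g_hasDeriv (mu := mu) (hdiff s (ne_of_gt hs))).deriv).symm
  refine le_of_tendsto htend ?_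
  filter_upwards [Ioo_mem_nhdsGT_of_mem ⟨le_rfl, ht⟩] with s hs
  exact aux_g_mono hconv hdiff (ne_of_gt hs.1) (ne_of_gt ht) hs.2.le

lemma aux_g_odd (hsymm : ∀ t : ℝ, ρ (-t) = ρ t) (t : ℝ) :
    deriv (fun u => ρ u + mu / 2 * u ^ 2) (-t) = -deriv (fun u => ρ u + mu / 2 * u ^ 2) t := by
  set g : ℝ → ℝ := fun u => ρ u + mu / 2 * u ^ 2 with hg
  have hfe : (fun x => g (-x)) = g := by
    funext x; simp [hg, hsymm]
  have h := deriv_comp_neg g t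
  rw [hfe] at h
  linarith

lemma aux_g_ub (hconv : ConvexOn ℝ Set.univ (fun u => ρ u + mu / 2 * u ^ 2))
    (hdiff : ∀ t : ℝ, t ≠ 0 → DifferentiableAt ℝ ρ t)
    (hsymm : ∀ t : ℝ, ρ (-t) = ρ t)
    (hlim : Filter.Tendsto (deriv ρ) (nhdsWithin 0 (Set.Ioi 0)) (nhds lam))
    {t : ℝ} (ht : t < 0) :
    deriv (fun u => ρ u + mu / 2 * u ^ 2) t ≤ -lam := by
  have h1 : lam ≤ deriv (fun u => ρ u + mu / 2 * u ^ 2) (-t) :=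
    aux_g_lb hconv hdiff hlim (by linarith)
  have h2 := aux_g_odd (mu := mu) hsymm (-t)
  rw [neg_neg] at h2
  rw [h2]
  linarith

/-- Master coordinatewise inequality: `(q'(a) − q'(b))(a − b) ≤ μ (a − b)²`. -/
lemma qDeriv_weak_mono (hconv : ConvexOn ℝ Set.univ (fun u => ρ u + mu / 2 * u ^ 2))
    (hdiff : ∀ t : ℝ, t ≠ 0 → DifferentiableAt ℝ ρ t)
    (hsymm : ∀ t : ℝ, ρ (-t) = ρ t)
    (hlim : Filter.Tendsto (deriv ρ) (nhdsWithin 0 (Set.Ioi 0)) (nhds lam))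
    (a b : ℝ) :
    (qDeriv lam ρ a - qDeriv lam ρ b) * (a - b) ≤ mu * (a - b) ^ 2 := by
  classical
  set g : ℝ → ℝ := fun u => ρ u + mu / 2 * u ^ 2 with hg
  set φ : ℝ → ℝ := fun t => if t = 0 then 0 else deriv g t - lam * (SignType.sign t : ℝ) with hφ
  have hq : ∀ t : ℝ, qDeriv lam ρ t = mu * t - φ t := by
    intro t
    by_cases ht : t = 0
    · subst ht
      simp [hφ, aux_qderiv_zero (lam := lam) hsymm]
    · have h1 := aux_qderiv_sign (lam := lam) ht (hdiff t ht)
      have h2 : deriv ρ t = deriv g t - mu * t := by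
        have := (aux_g_hasDeriv (mu := mu) (hdiff t ht)).deriv
        rw [hg]; linarith [this]
      rw [h1, h2]
      simp only [hφ, if_neg ht, hg]
      ring
  have hpos : ∀ t : ℝ, 0 < t → 0 ≤ φ t := by
    intro t ht
    simp only [hφ, if_neg (ne_of_gt ht), sign_pos ht, SignType.coe_one, mul_one]
    have := aux_g_lb hconv hdiff hlim ht
    rw [← hg] at this
    linarith
  have hneg : ∀ t : ℝ, t < 0 → φ t ≤ 0 := by
    intro t ht
    simp only [hφ, if_neg (ne_of_lt ht), sign_neg ht, SignType.coe_neg_one, mul_neg_one]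
    have := aux_g_ub hconv hdiff hsymm hlim ht
    rw [← hg] at this
    linarith
  have hmono : Monotone φ := by
    intro x y hxy
    rcases lt_trichotomy x 0 with hx | hx | hx
    · rcases lt_trichotomy y 0 with hy | hy | hy
      · simp only [hφ, if_neg (ne_of_lt hx), if_neg (ne_of_lt hy), sign_neg hx, sign_neg hy,
          SignType.coe_neg_one, mul_neg_one]
        have := aux_g_mono hconv hdiff (ne_of_lt hx) (ne_of_lt hy) hxy
        rw [← hg] at this
        linarith
      · subst hy
        have := hneg x hx
        simpa [hφ] using this
      · exact (hneg x hx).trans (hpos y hy)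
    · subst hx
      rcases lt_trichotomy y 0 with hy | hy | hy
      · linarith
      · subst hy; exact le_rfl
      · have := hpos y hy
        simpa [hφ] using this
    · have hy : 0 < y := lt_of_lt_of_le hx hxy
      simp only [hφ, if_neg (ne_of_gt hx), if_neg (ne_of_gt hy), sign_pos hx, sign_pos hy,
        SignType.coe_one, mul_one]
      have := aux_g_mono hconv hdiff (ne_of_gt hx) (ne_of_gt hy) hxy
      rw [← hg] at this
      linarith
  have h0 : 0 ≤ (φ a - φ b) * (a - b) := by
    rcases le_total a b with hab | hab
    · have h1 := hmono hab
      nlinarith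
    · have h1 := hmono hab
      nlinarith
  have : (qDeriv lam ρ a - qDeriv lam ρ b) * (a - b)
      = mu * (a - b) ^ 2 - (φ a - φ b) * (a - b) := by
    rw [hq a, hq b]; ring
  linarith

end AuxQ


set_option maxHeartbeats 1000000 in
/-- cone lemma: under the local RSC inequality, `μ`-amenability, the
zero-subgradient condition for `β̂` supported on `S` with strict dual feasibility, and
`λ ≥ 4Rτ₁ log p/(δn)`, any stationary point `β̃` with `‖β̃ − β̂‖₂ ≤ 1` satisfies
`‖β̃ − β̂‖₁ ≤ (4/δ + 2) √k ‖β̃ − β̂‖₂`. -/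
theorem stationary_cone_bound (p n k : ℕ) (hp : 2 ≤ p) (hn : 0 < n) (hk : 0 < k)
    (S : Finset (Fin p)) (hS : S.card = k)
    (L : EuclideanSpace ℝ (Fin p) → ℝ) (hL : Differentiable ℝ L)
    (α₁ τ₁ : ℝ) (hα₁ : 0 < α₁) (hτ₁ : 0 ≤ τ₁)
    (hRSC : ∀ β Δ : EuclideanSpace ℝ (Fin p), ‖Δ‖ ≤ 1 →
      α₁ * ‖Δ‖ ^ 2 - τ₁ * (Real.log p / n) * (norm1 Δ) ^ 2 ≤
        ⟪gradient L (β + Δ) - gradient L β, Δ⟫)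
    (ρ : ℝ → ℝ) (lam mu R δ : ℝ) (hlam : 0 < lam)
    (hmu : 0 ≤ mu) (hmuα : mu < α₁) (hρ : Amenable lam mu ρ)
    (βhat : EuclideanSpace ℝ (Fin p)) (hβhatS : ∀ j, βhat j ≠ 0 → j ∈ S)
    (hβhat1 : norm1 βhat ≤ R)
    (zhat : Fin p → ℝ)
    (hzero : ∀ j, gradient L βhat j - qDeriv lam ρ (βhat j) + lam * zhat j = 0)
    (hzS : (fun j : {j // j ∈ S} => zhat j) ∈ l1Subdiff (fun j : {j // j ∈ S} => βhat j))
    (hδ : 0 < δ) (hδ_ub : δ ≤ 1)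
    (hdual : ∀ j ∉ S, |zhat j| ≤ 1 - δ)
    (βt : EuclideanSpace ℝ (Fin p)) (hβt : IsStationaryPt L ρ lam R βt)
    (hclose : ‖βt - βhat‖ ≤ 1)
    (hlam_lb : 4 * R * τ₁ * Real.log p / (δ * n) ≤ lam) :
    norm1 (βt - βhat) ≤ (4 / δ + 2) * Real.sqrt k * ‖βt - βhat‖ := by
  classical
  obtain ⟨hβt1, z, ⟨hz_bd, hz_eq⟩, hstat⟩ := hβt
  set Δ : EuclideanSpace ℝ (Fin p) := βt - βhat with hΔ
  have hΔj : ∀ j, Δ j = βt j - βhat j := fun j => rfl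
  set a : ℝ := ∑ j ∈ S, |Δ j| with ha
  set b : ℝ := ∑ j ∈ Sᶜ, |Δ j| with hb
  have ha0 : 0 ≤ a := Finset.sum_nonneg fun j _ => abs_nonneg _
  have hb0 : 0 ≤ b := Finset.sum_nonneg fun j _ => abs_nonneg _
  have hsplit : norm1 Δ = a + b := (Finset.sum_add_sum_compl S _).symm
  have hnormsq : ‖Δ‖ ^ 2 = ∑ j, (Δ j) ^ 2 := by
    rw [EuclideanSpace.norm_eq, Real.sq_sqrt (Finset.sum_nonneg fun j _ => by positivity)]
    simp [Real.norm_eq_abs, sq_abs]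
  -- Step 1: RSC applied at βhat with increment Δ
  have hRS : α₁ * ‖Δ‖ ^ 2 - τ₁ * (Real.log p / n) * (norm1 Δ) ^ 2 ≤
      ∑ j, (gradient L βt j - gradient L βhat j) * Δ j := by
    have h1 := hRSC βhat Δ hclose
    have h2 : βhat + Δ = βt := by rw [hΔ]; abel
    rw [h2] at h1
    have h3 : ⟪gradient L βt - gradient L βhat, Δ⟫ =
        ∑ j, (gradient L βt j - gradient L βhat j) * Δ j := by
      rw [PiLp.inner_apply]
      exact Finset.sum_congr rfl fun j _ => by
        simp [RCLike.inner_apply, mul_comm]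
    rwa [h3] at h1
  -- Step 2: stationarity at βt tested with βhat
  have hst : ∑ j, (gradient L βt j - qDeriv lam ρ (βt j) + lam * z j) * Δ j ≤ 0 := by
    have h1 := hstat βhat hβhat1
    have h2 : ∑ j, (gradient L βt j - qDeriv lam ρ (βt j) + lam * z j) * (βhat j - βt j)
        = -∑ j, (gradient L βt j - qDeriv lam ρ (βt j) + lam * z j) * Δ j := by
      rw [← Finset.sum_neg_distrib]
      exact Finset.sum_congr rfl fun j _ => by rw [hΔj]; ring
    rw [h2] at h1
    linarith
  -- Step 3: zero subgradient at βhat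
  have hz0 : ∑ j, (gradient L βhat j - qDeriv lam ρ (βhat j) + lam * zhat j) * Δ j = 0 :=
    Finset.sum_eq_zero fun j _ => by rw [hzero j]; ring
  -- Step 4: combine
  have hA : ∑ j, (gradient L βt j - gradient L βhat j) * Δ j ≤
      ∑ j, (qDeriv lam ρ (βt j) - qDeriv lam ρ (βhat j)) * Δ j
        + lam * ∑ j, (zhat j - z j) * Δ j := by
    have key : ∑ j, (gradient L βt j - gradient L βhat j) * Δ j
        = (∑ j, (gradient L βt j - qDeriv lam ρ (βt j) + lam * z j) * Δ j)
          - (∑ j, (gradient L βhat j - qDeriv lam ρ (βhat j) + lam * zhat j) * Δ j)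
          + (∑ j, (qDeriv lam ρ (βt j) - qDeriv lam ρ (βhat j)) * Δ j)
          + lam * ∑ j, (zhat j - z j) * Δ j := by
      rw [Finset.mul_sum, ← Finset.sum_sub_distrib, ← Finset.sum_add_distrib,
        ← Finset.sum_add_distrib]
      exact Finset.sum_congr rfl fun j _ => by ring
    rw [key, hz0]
    linarith
  -- Step 5: the q-difference term is bounded by μ‖Δ‖²
  have hq : ∑ j, (qDeriv lam ρ (βt j) - qDeriv lam ρ (βhat j)) * Δ j ≤ mu * ‖Δ‖ ^ 2 := by
    rw [hnormsq, Finset.mul_sum]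
    refine Finset.sum_le_sum fun j _ => ?_
    have := qDeriv_weak_mono hρ.conv hρ.diff hρ.symm hρ.deriv_lim (βt j) (βhat j)
    rw [hΔj]
    exact this
  -- Step 6: the zhat term
  have hzhat : ∑ j, zhat j * Δ j ≤ a + (1 - δ) * b := by
    rw [← Finset.sum_add_sum_compl S (fun j => zhat j * Δ j)]
    have h1 : ∑ j ∈ S, zhat j * Δ j ≤ a := by
      rw [ha]
      refine Finset.sum_le_sum fun j hj => ?_
      calc zhat j * Δ j ≤ |zhat j * Δ j| := le_abs_self _
        _ = |zhat j| * |Δ j| := abs_mul _ _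
        _ ≤ 1 * |Δ j| := by
            exact mul_le_mul_of_nonneg_right (hzS.1 ⟨j, hj⟩) (abs_nonneg _)
        _ = |Δ j| := one_mul _
    have h2 : ∑ j ∈ Sᶜ, zhat j * Δ j ≤ (1 - δ) * b := by
      rw [hb, Finset.mul_sum]
      refine Finset.sum_le_sum fun j hj => ?_
      calc zhat j * Δ j ≤ |zhat j * Δ j| := le_abs_self _
        _ = |zhat j| * |Δ j| := abs_mul _ _
        _ ≤ (1 - δ) * |Δ j| :=
            mul_le_mul_of_nonneg_right (hdual j (Finset.mem_compl.mp hj)) (abs_nonneg _)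
    linarith
  -- Step 7: the z term
  have hzt : -∑ j, z j * Δ j ≤ a - b := by
    have h1 : ∑ j, z j * Δ j = ∑ j, z j * βt j - ∑ j, z j * βhat j := by
      rw [← Finset.sum_sub_distrib]
      exact Finset.sum_congr rfl fun j _ => by rw [hΔj]; ring
    have h2 : ∑ j, z j * βt j = ∑ j, |βt j| := hz_eq
    have h3 : ∑ j, z j * βhat j = ∑ j ∈ S, z j * βhat j := by
      refine (Finset.sum_subset S.subset_univ fun j _ hj => ?_).symm
      have : βhat j = 0 := by
        by_contra h
        exact hj (hβhatS j h)
      rw [this, mul_zero]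
    have h4 : ∑ j ∈ S, z j * βhat j ≤ ∑ j ∈ S, |βhat j| := by
      refine Finset.sum_le_sum fun j hj => ?_
      calc z j * βhat j ≤ |z j * βhat j| := le_abs_self _
        _ = |z j| * |βhat j| := abs_mul _ _
        _ ≤ 1 * |βhat j| := mul_le_mul_of_nonneg_right (hz_bd j) (abs_nonneg _)
        _ = |βhat j| := one_mul _
    have h5 : ∑ j, |βt j| = ∑ j ∈ S, |βt j| + ∑ j ∈ Sᶜ, |βt j| :=
      (Finset.sum_add_sum_compl S _).symm
    have h6 : ∑ j ∈ Sᶜ, |βt j| = b := by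
      rw [hb]
      refine Finset.sum_congr rfl fun j hj => ?_
      have : βhat j = 0 := by
        by_contra h
        exact (Finset.mem_compl.mp hj) (hβhatS j h)
      rw [hΔj, this, sub_zero]
    have h7 : ∑ j ∈ S, |βhat j| - ∑ j ∈ S, |βt j| ≤ a := by
      rw [ha, ← Finset.sum_sub_distrib]
      refine Finset.sum_le_sum fun j hj => ?_
      rw [hΔj]
      calc |βhat j| - |βt j| ≤ |βhat j - βt j| := abs_sub_abs_le_abs_sub _ _
        _ = |βt j - βhat j| := abs_sub_comm _ _
    linarith
  -- Step 8: main inequality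
  have hzsum : ∑ j, (zhat j - z j) * Δ j ≤ 2 * a - δ * b := by
    have : ∑ j, (zhat j - z j) * Δ j = ∑ j, zhat j * Δ j - ∑ j, z j * Δ j := by
      rw [← Finset.sum_sub_distrib]
      exact Finset.sum_congr rfl fun j _ => by ring
    rw [this]
    linarith
  have hc0 : (0:ℝ) ≤ Real.log p / n :=
    div_nonneg (Real.log_nonneg (by exact_mod_cast Nat.one_le_of_lt hp)) (Nat.cast_nonneg n)
  have main : α₁ * ‖Δ‖ ^ 2 - τ₁ * (Real.log p / n) * (a + b) ^ 2 ≤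
      mu * ‖Δ‖ ^ 2 + lam * (2 * a - δ * b) := by
    have h1 : lam * ∑ j, (zhat j - z j) * Δ j ≤ lam * (2 * a - δ * b) :=
      mul_le_mul_of_nonneg_left hzsum hlam.le
    rw [← hsplit]
    linarith
  -- Step 9: bound the tolerance term
  have hab2R : a + b ≤ 2 * R := by
    rw [← hsplit]
    have : norm1 Δ ≤ norm1 βt + norm1 βhat := by
      rw [norm1, norm1, norm1, ← Finset.sum_add_distrib]
      refine Finset.sum_le_sum fun j _ => ?_
      rw [hΔj]
      exact abs_sub _ _
    linarith
  have hτbound : τ₁ * (Real.log p / n) * (a + b) ^ 2 ≤ lam * δ / 2 * (a + b) := by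
    have hδn : (0:ℝ) < δ * n := mul_pos hδ (by exact_mod_cast hn)
    rw [div_le_iff₀ hδn] at hlam_lb
    have hn' : (0:ℝ) < (n:ℝ) := by exact_mod_cast hn
    have h2Rc : 2 * R * (τ₁ * (Real.log p / n)) ≤ lam * δ / 2 := by
      have e1 : 2 * R * (τ₁ * (Real.log p / n)) = 4 * R * τ₁ * Real.log p / (2 * n) := by
        field_simp
        ring
      have e2 : lam * δ / 2 = lam * (δ * n) / (2 * n) := by
        field_simp
      rw [e1, e2]
      gcongr
    have hab0 : (0:ℝ) ≤ a + b := by linarith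
    calc τ₁ * (Real.log p / n) * (a + b) ^ 2
        = (τ₁ * (Real.log p / n) * (a + b)) * (a + b) := by ring
      _ ≤ (τ₁ * (Real.log p / n) * (2 * R)) * (a + b) := by
          exact mul_le_mul_of_nonneg_right
            (mul_le_mul_of_nonneg_left hab2R (mul_nonneg hτ₁ hc0)) hab0
      _ = 2 * R * (τ₁ * (Real.log p / n)) * (a + b) := by ring
      _ ≤ lam * δ / 2 * (a + b) := mul_le_mul_of_nonneg_right h2Rc hab0
  -- Step 10: cone inequality
  have hcone : b ≤ (1 + 4 / δ) * a := by
    have hDnn : (0:ℝ) ≤ (α₁ - mu) * ‖Δ‖ ^ 2 :=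
      mul_nonneg (by linarith) (sq_nonneg _)
    have key0 : (α₁ - mu) * ‖Δ‖ ^ 2 ≤ lam * ((δ / 2 + 2) * a - δ / 2 * b) := by
      linarith [main, hτbound]
    have h1 : lam * (0:ℝ) ≤ lam * ((δ / 2 + 2) * a - δ / 2 * b) := by
      rw [mul_zero]
      linarith
    have h2 : (0:ℝ) ≤ (δ / 2 + 2) * a - δ / 2 * b := le_of_mul_le_mul_left h1 hlam
    have h3 : (δ / 2 + 2) * a = δ / 2 * ((1 + 4 / δ) * a) := by
      field_simp
      ring
    rw [h3] at h2
    have h4 : δ / 2 * b ≤ δ / 2 * ((1 + 4 / δ) * a) := by linarith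
    exact le_of_mul_le_mul_left h4 (by linarith)
  -- Step 11: Cauchy–Schwarz on S
  have haCS : a ≤ Real.sqrt k * ‖Δ‖ := by
    have h1 : a ^ 2 ≤ (k : ℝ) * ∑ j ∈ S, (Δ j) ^ 2 := by
      have := sq_sum_le_card_mul_sum_sq (s := S) (f := fun j => |Δ j|)
      simp only [sq_abs] at this
      rw [← ha, hS] at this
      exact_mod_cast this
    have h2 : ∑ j ∈ S, (Δ j) ^ 2 ≤ ‖Δ‖ ^ 2 := by
      rw [hnormsq]
      exact Finset.sum_le_sum_of_subset_of_nonneg S.subset_univ fun j _ _ => sq_nonneg _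
    have h3 : a ^ 2 ≤ (k : ℝ) * ‖Δ‖ ^ 2 := by
      have hk0 : (0:ℝ) ≤ k := Nat.cast_nonneg k
      nlinarith
    calc a = Real.sqrt (a ^ 2) := (Real.sqrt_sq ha0).symm
      _ ≤ Real.sqrt ((k : ℝ) * ‖Δ‖ ^ 2) := Real.sqrt_le_sqrt h3
      _ = Real.sqrt k * ‖Δ‖ := by
          rw [Real.sqrt_mul (Nat.cast_nonneg k), Real.sqrt_sq (norm_nonneg _)]
  -- Conclusion
  have hcoef : (0:ℝ) ≤ 4 / δ + 2 := by positivity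
  calc norm1 Δ = a + b := hsplit
    _ ≤ a + (1 + 4 / δ) * a := by linarith
    _ = (4 / δ + 2) * a := by ring
    _ ≤ (4 / δ + 2) * (Real.sqrt k * ‖Δ‖) := mul_le_mul_of_nonneg_left haCS hcoef
    _ = (4 / δ + 2) * Real.sqrt k * ‖Δ‖ := by ring
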